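/- Let G be an edge-colored complete graph of order n ≥ 4 such that every vertex x has color degree δ^c(x) ≥ (n+1)/2. Then every vertex of G is contained in a properly colored cycle of length 4. -/
import Mathlib

open Finset in
private lemma img_le_aux {β C : Type*} [DecidableEq C] (s : Finset β) (f : β → C) (a : C)
    (p : β → Prop) [DecidablePred p] (hp : ∀ x, p x ↔ f x ≠ a) :
    (s.image f).card ≤ (s.filter p).card + 1 := by
  have hsub : s.image f ⊆ insert a ((s.filter p).image f) := by
    intro b hb
    obtain ⟨x, hx, rfl⟩ := mem_image.1 hb
    by_cases hfx : f x = a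
    · exact hfx ▸ mem_insert_self _ _
    · exact mem_insert_of_mem (mem_image_of_mem _ (mem_filter.2 ⟨hx, (hp x).2 hfx⟩))
  calc (s.image f).card ≤ (insert a ((s.filter p).image f)).card := card_le_card hsub
    _ ≤ ((s.filter p).image f).card + 1 := card_insert_le _ _
    _ ≤ (s.filter p).card + 1 := Nat.add_le_add_right card_image_le 1

private lemma sandwich_aux {ι : Type*} (s : Finset ι) (g h : ι → ℕ) (M : ℕ)
    (hg : ∀ i ∈ s, g i ≤ M) (hh : ∀ i ∈ s, M ≤ h i)
    (he : ∑ i ∈ s, h i ≤ ∑ i ∈ s, g i) :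
    ∀ i ∈ s, g i = M ∧ h i = M := by
  have h1 : ∑ i ∈ s, g i ≤ s.card * M := by
    calc ∑ i ∈ s, g i ≤ ∑ _i ∈ s, M := Finset.sum_le_sum hg
      _ = s.card * M := by rw [Finset.sum_const, smul_eq_mul]
  have h2 : s.card * M ≤ ∑ i ∈ s, h i := by
    calc s.card * M = ∑ _i ∈ s, M := by rw [Finset.sum_const, smul_eq_mul]
      _ ≤ ∑ i ∈ s, h i := Finset.sum_le_sum hh
  intro i hi
  constructor
  · by_contra hne
    have hlt : ∑ j ∈ s, g j < ∑ _j ∈ s, M :=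
      Finset.sum_lt_sum hg ⟨i, hi, lt_of_le_of_ne (hg i hi) hne⟩
    rw [Finset.sum_const, smul_eq_mul] at hlt
    omega
  · by_contra hne
    have hlt : ∑ _j ∈ s, M < ∑ j ∈ s, h j :=
      Finset.sum_lt_sum hh ⟨i, hi, lt_of_le_of_ne (hh i hi) (Ne.symm hne)⟩
    rw [Finset.sum_const, smul_eq_mul] at hlt
    omega

open Finset in
private lemma main_aux {V C : Type*} [Fintype V] [DecidableEq V] [DecidableEq C]
    (c : Sym2 V → C) (v : V) (n : ℕ) (hn : 4 ≤ n) (hcardn : Fintype.card V = n)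
    (hdeg' : ∀ x : V, n + 1 ≤ 2 * ((univ.erase x).image (fun w => c s(x, w))).card)
    (K : ∀ x y z : V, x ≠ v → y ≠ v → z ≠ v → x ≠ y → y ≠ z →
      c s(v, x) ≠ c s(v, z) → c s(x, y) ≠ c s(v, x) → c s(y, z) ≠ c s(v, z) →
      c s(x, y) = c s(y, z)) : False := by
  classical
  have hsymm : ∀ a b : V, c s(a, b) = c s(b, a) := fun a b => by rw [Sym2.eq_swap]
  set deg : V → ℕ := fun u => ((univ.erase u).image (fun w => c s(u, w))).card with hdegdef
  set fib : V → C → Finset V := fun u a => (univ.erase u).filter (fun w => c s(u, w) = a) with hfibdef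
  set D : V → Finset V := fun u => (univ.erase u).filter (fun w => c s(u, w) ≠ c s(u, v)) with hDdef
  set S : V → Finset V := fun y => (univ.erase y).filter (fun u => u ≠ v ∧ c s(u, y) ≠ c s(u, v)) with hSdef
  have hdeg2 : ∀ x : V, n + 1 ≤ 2 * deg x := hdeg'
  have hcard_erase : ∀ u : V, (univ.erase u).card = n - 1 := by
    intro u; rw [Finset.card_erase_of_mem (mem_univ u), Finset.card_univ, hcardn]
  have memD : ∀ u w : V, w ∈ D u ↔ (w ≠ u ∧ c s(u, w) ≠ c s(u, v)) := by
    intro u w; rw [hDdef]; simp [mem_filter, mem_erase]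
  have memS : ∀ y u : V, u ∈ S y ↔ (u ≠ y ∧ u ≠ v ∧ c s(u, y) ≠ c s(u, v)) := by
    intro y u; rw [hSdef]; simp [mem_filter, mem_erase, and_assoc]
  have memfib : ∀ u a w, w ∈ fib u a ↔ (w ≠ u ∧ c s(u, w) = a) := by
    intro u a w; rw [hfibdef]; simp [mem_filter, mem_erase]
  have hSsub : ∀ y, S y ⊆ univ.erase y := by
    intro y; rw [hSdef]; exact filter_subset _ _
  have FB : ∀ (u : V) (a : C), deg u + (fib u a).card ≤ n := by
    intro u a
    have h1 : deg u ≤ ((univ.erase u).filter (fun w => c s(u, w) ≠ a)).card + 1 :=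
      img_le_aux _ _ a _ (fun x => Iff.rfl)
    have h2 : (fib u a).card + ((univ.erase u).filter (fun w => c s(u, w) ≠ a)).card = n - 1 := by
      rw [hfibdef]
      rw [Finset.card_filter_add_card_filter_not (p := fun w => c s(u, w) = a)]
      exact hcard_erase u
    omega
  have DB : ∀ u : V, deg u ≤ (D u).card + 1 :=
    fun u => img_le_aux _ _ (c s(u, v)) _ (fun x => Iff.rfl)
  have B1 : ∀ u : V, n - 1 ≤ 2 * (D u).card := by
    intro u; have := hdeg2 u; have := DB u; omega
  have fibD : ∀ u : V, (fib u (c s(u, v))).card + (D u).card = n - 1 := by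
    intro u
    rw [hfibdef, hDdef]
    rw [Finset.card_filter_add_card_filter_not (p := fun w => c s(u, w) = c s(u, v))]
    exact hcard_erase u
  have Hgamma : ∀ y : V, y ≠ v → ∀ u₁ ∈ S y, ∀ u₂ ∈ S y, c s(v, u₁) ≠ c s(v, u₂) →
      ∀ u ∈ S y, c s(u, y) = c s(u₁, y) := by
    intro y hyv u₁ hu₁ u₂ hu₂ hne u hu
    obtain ⟨hu1y, hu1v, hc1⟩ := (memS y u₁).1 hu₁
    obtain ⟨hu2y, hu2v, hc2⟩ := (memS y u₂).1 hu₂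
    obtain ⟨huy, huv, hcu⟩ := (memS y u).1 hu
    have hcu' : c s(u, y) ≠ c s(v, u) := by rw [hsymm v u]; exact hcu
    have hc1' : c s(y, u₁) ≠ c s(v, u₁) := by rw [hsymm v u₁, hsymm y u₁]; exact hc1
    have hc2' : c s(y, u₂) ≠ c s(v, u₂) := by rw [hsymm v u₂, hsymm y u₂]; exact hc2
    by_cases h1 : c s(v, u) = c s(v, u₁)
    · have hne2 : c s(v, u) ≠ c s(v, u₂) := by rw [h1]; exact hne
      have e1 : c s(u, y) = c s(y, u₂) := K u y u₂ huv hyv hu2v huy (Ne.symm hu2y) hne2 hcu' hc2'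
      have e2 : c s(u₁, y) = c s(y, u₂) := K u₁ y u₂ hu1v hyv hu2v hu1y (Ne.symm hu2y) hne
        (by rw [hsymm v u₁]; exact hc1) hc2'
      rw [e1, e2]
    · have e1 : c s(u, y) = c s(y, u₁) := K u y u₁ huv hyv hu1v huy (Ne.symm hu1y) h1 hcu' hc1'
      rw [e1, hsymm y u₁]
  have B2 : ∀ y : V, y ≠ v → 2 * (S y).card ≤ n - 1 := by
    intro y hyv
    by_cases hcase : ∀ u₁ ∈ S y, ∀ u₂ ∈ S y, c s(v, u₁) = c s(v, u₂)
    · rcases (S y).eq_empty_or_nonempty with he | ⟨u₀, hu₀⟩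
      · rw [he]; simp
      · have hsub : S y ⊆ fib v (c s(v, u₀)) := by
          intro u hu
          obtain ⟨huy, huv, hcu⟩ := (memS y u).1 hu
          exact (memfib v _ u).2 ⟨huv, hcase u hu u₀ hu₀⟩
        have h1 := card_le_card hsub
        have h2 := FB v (c s(v, u₀))
        have h3 := hdeg2 v
        omega
    · push_neg at hcase
      obtain ⟨u₁, hu₁, u₂, hu₂, hne⟩ := hcase
      have hγ := Hgamma y hyv u₁ hu₁ u₂ hu₂ hne
      have hvy : v ∈ univ.erase y := mem_erase.2 ⟨Ne.symm hyv, mem_univ v⟩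
      have hins : insert v (S y) ⊆ univ.erase y := by
        intro w hw
        rcases mem_insert.1 hw with rfl | hw'
        · exact hvy
        · exact hSsub y hw'
      have hvnS : v ∉ S y := fun h => ((memS y v).1 h).2.1 rfl
      set T := (univ.erase y) \ insert v (S y) with hTdef
      have himg : (univ.erase y).image (fun w => c s(y, w)) ⊆
          insert (c s(y, v)) (insert (c s(u₁, y)) (T.image (fun w => c s(y, w)))) := by
        intro b hb
        obtain ⟨w, hw, rfl⟩ := mem_image.1 hb
        by_cases hwv : w = v
        · subst hwv; exact mem_insert_self _ _
        · by_cases hwS : w ∈ S y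
          · have hcw : c s(y, w) = c s(u₁, y) := by rw [hsymm y w]; exact hγ w hwS
            rw [hcw]; exact mem_insert_of_mem (mem_insert_self _ _)
          · exact mem_insert_of_mem (mem_insert_of_mem (mem_image_of_mem _
              (mem_sdiff.2 ⟨hw, fun h => by
                rcases mem_insert.1 h with rfl | h' <;> [exact hwv rfl; exact hwS h']⟩)))
      have hTcard : T.card = (n - 1) - ((S y).card + 1) := by
        rw [hTdef, card_sdiff_of_subset hins, card_insert_of_notMem hvnS, hcard_erase]
      have hSle : (S y).card + 1 ≤ n - 1 := by
        have := card_le_card hins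
        rw [card_insert_of_notMem hvnS, hcard_erase] at this
        exact this
      have hdy : deg y ≤ 2 + T.card := by
        rw [hdegdef]
        calc ((univ.erase y).image (fun w => c s(y, w))).card
            ≤ (insert (c s(y, v)) (insert (c s(u₁, y)) (T.image (fun w => c s(y, w))))).card :=
              card_le_card himg
          _ ≤ (insert (c s(u₁, y)) (T.image (fun w => c s(y, w)))).card + 1 := card_insert_le _ _
          _ ≤ (T.image (fun w => c s(y, w))).card + 1 + 1 :=
              Nat.add_le_add_right (card_insert_le _ _) 1
          _ ≤ 2 + T.card := by have := card_image_le (s := T) (f := fun w => c s(y, w)); omega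
      have := hdeg2 y
      omega
  -- double counting
  have hDsubv : ∀ u, D u ⊆ univ.erase v := by
    intro u w hw
    have h := (memD u w).1 hw
    exact mem_erase.2 ⟨fun hwv => h.2 (hwv ▸ rfl), mem_univ w⟩
  have hSsubv : ∀ y, S y ⊆ univ.erase v := by
    intro y u hu
    exact mem_erase.2 ⟨((memS y u).1 hu).2.1, mem_univ u⟩
  have hDcard : ∀ u, (D u).card = ∑ y ∈ univ.erase v, (if y ∈ D u then 1 else 0) := by
    intro u
    have hfe : (univ.erase v).filter (fun y => y ∈ D u) = D u := by
      ext w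
      simp only [mem_filter]
      exact ⟨fun h => h.2, fun h => ⟨hDsubv u h, h⟩⟩
    have h := Finset.card_filter (fun y => y ∈ D u) (univ.erase v)
    rw [hfe] at h
    exact h
  have hScard : ∀ y, (S y).card = ∑ u ∈ univ.erase v, (if u ∈ S y then 1 else 0) := by
    intro y
    have hfe : (univ.erase v).filter (fun u => u ∈ S y) = S y := by
      ext w
      simp only [mem_filter]
      exact ⟨fun h => h.2, fun h => ⟨hSsubv y h, h⟩⟩
    have h := Finset.card_filter (fun u => u ∈ S y) (univ.erase v)
    rw [hfe] at h
    exact h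
  have sumDS : ∑ u ∈ univ.erase v, (D u).card = ∑ y ∈ univ.erase v, (S y).card := by
    calc ∑ u ∈ univ.erase v, (D u).card
        = ∑ u ∈ univ.erase v, ∑ y ∈ univ.erase v, (if y ∈ D u then 1 else 0) :=
          Finset.sum_congr rfl (fun u _ => hDcard u)
      _ = ∑ y ∈ univ.erase v, ∑ u ∈ univ.erase v, (if y ∈ D u then 1 else 0) := Finset.sum_comm
      _ = ∑ y ∈ univ.erase v, ∑ u ∈ univ.erase v, (if u ∈ S y then 1 else 0) := by
          refine Finset.sum_congr rfl fun y hy => Finset.sum_congr rfl fun u hu => ?_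
          have huv : u ≠ v := (mem_erase.1 hu).1
          have hiff : (y ∈ D u) ↔ (u ∈ S y) := by
            rw [memD, memS]
            exact ⟨fun ⟨h1, h2⟩ => ⟨Ne.symm h1, huv, h2⟩, fun ⟨h1, _, h2⟩ => ⟨Ne.symm h1, h2⟩⟩
          simp only [hiff]
      _ = ∑ y ∈ univ.erase v, (S y).card :=
          Finset.sum_congr rfl (fun y _ => (hScard y).symm)
  -- forcing equalities
  have hforce := sandwich_aux (univ.erase v) (fun y => 2 * (S y).card)
    (fun u => 2 * (D u).card) (n - 1)
    (fun y hy => B2 y (mem_erase.1 hy).1) (fun u _ => B1 u)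
    (by rw [← Finset.mul_sum, ← Finset.mul_sum, sumDS])
  have hS2 : ∀ y : V, y ≠ v → 2 * (S y).card = n - 1 := by
    intro y hy
    exact (hforce y (mem_erase.2 ⟨hy, mem_univ y⟩)).1
  have hD2 : ∀ u : V, u ≠ v → 2 * (D u).card = n - 1 := by
    intro u hu
    exact (hforce u (mem_erase.2 ⟨hu, mem_univ u⟩)).2
  have fibEq : ∀ u : V, u ≠ v → 2 * (fib u (c s(u, v))).card = n - 1 := by
    intro u hu
    have := fibD u
    have := hD2 u hu
    omega
  -- case 2a always holds
  have case2a : ∀ y : V, y ≠ v → ∃ a, ∀ u ∈ S y, c s(v, u) = a := by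
    intro y hyv
    by_cases hcase : ∀ u₁ ∈ S y, ∀ u₂ ∈ S y, c s(v, u₁) = c s(v, u₂)
    · have hScard2 := hS2 y hyv
      have hSne : (S y).Nonempty := card_pos.1 (by omega)
      obtain ⟨u₀, hu₀⟩ := hSne
      exact ⟨c s(v, u₀), fun u hu => hcase u hu u₀ hu₀⟩
    · exfalso
      push_neg at hcase
      obtain ⟨u₁, hu₁, u₂, hu₂, hne⟩ := hcase
      have hγ := Hgamma y hyv u₁ hu₁ u₂ hu₂ hne
      have hfibv := fibEq y hyv
      have hSc := hS2 y hyv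
      by_cases hgav : c s(u₁, y) = c s(y, v)
      · have hvnS : v ∉ S y := fun h => ((memS y v).1 h).2.1 rfl
        have hsub : insert v (S y) ⊆ fib y (c s(y, v)) := by
          intro w hw
          rcases mem_insert.1 hw with rfl | hw'
          · exact (memfib y _ w).2 ⟨Ne.symm hyv, rfl⟩
          · obtain ⟨hwy, hwv, _⟩ := (memS y w).1 hw'
            refine (memfib y _ w).2 ⟨hwy, ?_⟩
            rw [hsymm y w, hγ w hw', hgav]
        have hc := card_le_card hsub
        rw [card_insert_of_notMem hvnS] at hc
        omega
      · have hsubγ : S y ⊆ fib y (c s(u₁, y)) := by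
          intro w hw
          obtain ⟨hwy, hwv, _⟩ := (memS y w).1 hw
          exact (memfib _ _ _).2 ⟨hwy, by rw [hsymm y w]; exact hγ w hw⟩
        have hdisj : Disjoint (fib y (c s(u₁, y))) (fib y (c s(y, v))) := by
          rw [Finset.disjoint_left]
          intro w h1 h2
          exact hgav (((memfib _ _ _).1 h1).2 ▸ ((memfib _ _ _).1 h2).2)
        have hunion : fib y (c s(u₁, y)) ∪ fib y (c s(y, v)) ⊆ univ.erase y := by
          intro w hw
          rcases mem_union.1 hw with h | h
          · exact mem_erase.2 ⟨((memfib _ _ _).1 h).1, mem_univ w⟩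
          · exact mem_erase.2 ⟨((memfib _ _ _).1 h).1, mem_univ w⟩
        have hγc := card_le_card hsubγ
        have hcu : (fib y (c s(u₁, y)) ∪ fib y (c s(y, v))).card
            = (fib y (c s(u₁, y))).card + (fib y (c s(y, v))).card :=
          card_union_of_disjoint hdisj
        have hcover : fib y (c s(u₁, y)) ∪ fib y (c s(y, v)) = univ.erase y := by
          apply eq_of_subset_of_card_le hunion
          rw [hcu, hcard_erase]
          omega
        have himg2 : (univ.erase y).image (fun w => c s(y, w)) ⊆
            insert (c s(u₁, y)) {c s(y, v)} := by
          intro b hb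
          obtain ⟨w, hw, rfl⟩ := mem_image.1 hb
          rw [← hcover] at hw
          rcases mem_union.1 hw with h | h
          · rw [((memfib _ _ _).1 h).2]; exact mem_insert_self _ _
          · rw [((memfib _ _ _).1 h).2]; exact mem_insert_of_mem (mem_singleton_self _)
        have hd2 : deg y ≤ 2 := by
          rw [hdegdef]
          refine le_trans (card_le_card himg2) (le_trans (card_insert_le _ _) ?_)
          simp
        have := hdeg2 y
        omega
  -- all S y are the same fiber at v
  have SfibAll : ∀ y : V, y ≠ v → ∃ a, S y = fib v a := by
    intro y hyv
    obtain ⟨a, ha⟩ := case2a y hyv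
    refine ⟨a, eq_of_subset_of_card_le ?_ ?_⟩
    · intro u hu
      exact (memfib v a u).2 ⟨((memS y u).1 hu).2.1, ha u hu⟩
    · have h1 := FB v a
      have h2 := hdeg2 v
      have h3 := hS2 y hyv
      omega
  obtain ⟨y₀, hy₀⟩ : ∃ y₀ : V, y₀ ≠ v := by
    have h1 : 1 < Fintype.card V := by omega
    exact Fintype.exists_ne_of_one_lt_card h1 v
  have hAll : ∀ y : V, y ≠ v → S y = S y₀ := by
    intro y hyv
    obtain ⟨a, ha⟩ := SfibAll y hyv
    obtain ⟨a₀, ha₀⟩ := SfibAll y₀ hy₀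
    by_cases haa : a = a₀
    · rw [ha, ha₀, haa]
    · exfalso
      have hfa : 2 * (fib v a).card = n - 1 := by rw [← ha]; exact hS2 y hyv
      have hfa₀ : 2 * (fib v a₀).card = n - 1 := by rw [← ha₀]; exact hS2 y₀ hy₀
      have hdisj : Disjoint (fib v a) (fib v a₀) := by
        rw [Finset.disjoint_left]
        intro w h1 h2
        exact haa (((memfib _ _ _).1 h1).2 ▸ ((memfib _ _ _).1 h2).2)
      have hunion : fib v a ∪ fib v a₀ ⊆ univ.erase v := by
        intro w hw
        rcases mem_union.1 hw with h | h
        · exact mem_erase.2 ⟨((memfib _ _ _).1 h).1, mem_univ w⟩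
        · exact mem_erase.2 ⟨((memfib _ _ _).1 h).1, mem_univ w⟩
      have hcu : (fib v a ∪ fib v a₀).card = (fib v a).card + (fib v a₀).card :=
        card_union_of_disjoint hdisj
      have hcover : fib v a ∪ fib v a₀ = univ.erase v := by
        apply eq_of_subset_of_card_le hunion
        rw [hcu, hcard_erase]
        omega
      have himg2 : (univ.erase v).image (fun w => c s(v, w)) ⊆ insert a {a₀} := by
        intro b hb
        obtain ⟨w, hw, rfl⟩ := mem_image.1 hb
        rw [← hcover] at hw
        rcases mem_union.1 hw with h | h
        · rw [((memfib _ _ _).1 h).2]; exact mem_insert_self _ _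
        · rw [((memfib _ _ _).1 h).2]; exact mem_insert_of_mem (mem_singleton_self _)
      have hd2 : deg v ≤ 2 := by
        rw [hdegdef]
        refine le_trans (card_le_card himg2) (le_trans (card_insert_le _ _) ?_)
        simp
      have := hdeg2 v
      omega
  -- final contradiction: a vertex outside S y₀ ∪ {v} has color degree 1
  have hBc : 2 * (S y₀).card = n - 1 := hS2 y₀ hy₀
  obtain ⟨u, hu⟩ : ∃ u : V, u ∉ insert v (S y₀) := by
    by_contra hcc
    push_neg at hcc
    have hsub : (univ : Finset V) ⊆ insert v (S y₀) := fun u _ => hcc u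
    have h1 := card_le_card hsub
    have h2 := card_insert_le v (S y₀)
    rw [card_univ, hcardn] at h1
    omega
  have huv : u ≠ v := fun h => hu (h ▸ mem_insert_self _ _)
  have huB : u ∉ S y₀ := fun h => hu (mem_insert_of_mem h)
  have himgu : (univ.erase u).image (fun w => c s(u, w)) ⊆ {c s(u, v)} := by
    intro b hb
    obtain ⟨w, hw, rfl⟩ := mem_image.1 hb
    have hwu : w ≠ u := (mem_erase.1 hw).1
    by_cases hwv : w = v
    · subst hwv; exact mem_singleton_self _
    · have hunS : u ∉ S w := by rw [hAll w hwv]; exact huB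
      have hcc : c s(u, w) = c s(u, v) := by
        by_contra hne
        exact hunS ((memS w u).2 ⟨Ne.symm hwu, huv, hne⟩)
      rw [hcc]; exact mem_singleton_self _
  have hd1 : deg u ≤ 1 := by
    rw [hdegdef]
    refine le_trans (card_le_card himgu) ?_
    simp
  have := hdeg2 u
  omega

/-- Every vertex of an edge-colored complete graph of order `n ≥ 4` with all color degrees
at least `(n+1)/2` lies on a properly colored cycle of length 4. -/
theorem stmt_11 {V C : Type*} [Fintype V] (c : Sym2 V → C)
    (hn : 4 ≤ Fintype.card V)
    (hdeg : ∀ x : V,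
      Fintype.card V + 1 ≤ 2 * Set.ncard ((fun y => c s(x, y)) '' {y : V | y ≠ x})) :
    ∀ v : V, ∃ x y z : V, v ≠ x ∧ v ≠ y ∧ v ≠ z ∧ x ≠ y ∧ x ≠ z ∧ y ≠ z ∧
      c s(v, x) ≠ c s(x, y) ∧ c s(x, y) ≠ c s(y, z) ∧
      c s(y, z) ≠ c s(z, v) ∧ c s(z, v) ≠ c s(v, x) := by
  classical
  intro v
  by_contra hcon
  push_neg at hcon
  have hsymm : ∀ a b : V, c s(a, b) = c s(b, a) := fun a b => by rw [Sym2.eq_swap]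
  have hdeg' : ∀ x : V, Fintype.card V + 1 ≤
      2 * ((Finset.univ.erase x).image (fun w => c s(x, w))).card := by
    intro x
    have hset : {y : V | y ≠ x} = (↑(Finset.univ.erase x) : Set V) := by
      ext y; simp
    have h := hdeg x
    rw [hset, ← Finset.coe_image, Set.ncard_coe_finset] at h
    exact h
  have K : ∀ x y z : V, x ≠ v → y ≠ v → z ≠ v → x ≠ y → y ≠ z →
      c s(v, x) ≠ c s(v, z) → c s(x, y) ≠ c s(v, x) → c s(y, z) ≠ c s(v, z) →
      c s(x, y) = c s(y, z) := by
    intro x y z hxv hyv hzv hxy hyz hcol h1 h2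
    by_contra hne
    have hxz : x ≠ z := fun h => hcol (h ▸ rfl)
    have h3 := hcon x y z hxv.symm hyv.symm hzv.symm hxy hxz hyz h1.symm hne
      (by rw [hsymm z v]; exact h2)
    rw [hsymm z v] at h3
    exact hcol h3.symm
  exact main_aux c v (Fintype.card V) hn rfl hdeg' K
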